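/- Let U = (U_1, ..., U_d) be mutually independent random variables and define X recursively over a finite DAG G by X_i = f̃_i(X_{pa(i)}, U_i) where pa(i) is the set of parents of i. Then the joint law of X satisfies the causal Markov factorization: X_i is conditionally independent of its non-descendants given X_{pa(i)}; in particular each X_i can be written as a measurable function of (U_j)_{j ∈ an*(i)} alone. -/

import Mathlib

open MeasureTheory MeasurableSpace ProbabilityTheory

section AuxProb

variable {Ω : Type*} [mΩ : MeasurableSpace Ω] [StandardBorelSpace Ω]
  {μ : MeasureTheory.Measure Ω} [IsProbabilityMeasure μ]

omit [StandardBorelSpace Ω] in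
lemma my_integrable_indicator_one {A : Set Ω} (hA : MeasurableSet[mΩ] A) :
    Integrable (A.indicator fun _ => (1 : ℝ)) μ :=
  (integrable_const (1 : ℝ)).indicator hA

omit [StandardBorelSpace Ω] in
/-- Pull-out of an `m'`-measurable indicator. -/
lemma my_condexp_inter_left {m' : MeasurableSpace Ω} (hm : m' ≤ mΩ) {s A : Set Ω}
    (hs : MeasurableSet[m'] s) (hA : MeasurableSet[mΩ] A) :
    (μ⟦s ∩ A | m'⟧) =ᵐ[μ] s.indicator (fun _ => (1 : ℝ)) * (μ⟦A | m'⟧) := by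
  have hmul : (s ∩ A).indicator (fun _ => (1 : ℝ))
      = s.indicator (fun _ => (1 : ℝ)) * A.indicator (fun _ => (1 : ℝ)) := by
    exact Set.inter_indicator_one (s := s) (t := A) (M₀ := ℝ)
  calc (μ⟦s ∩ A | m'⟧)
      = μ[s.indicator (fun _ => (1:ℝ)) * A.indicator (fun _ => (1:ℝ)) | m'] := by rw [← hmul]
    _ =ᵐ[μ] s.indicator (fun _ => (1 : ℝ)) * (μ⟦A | m'⟧) := by
        refine condExp_mul_of_stronglyMeasurable_left (stronglyMeasurable_const.indicator hs) ?_ ?_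
        · rw [← hmul]
          exact my_integrable_indicator_one (mΩ := mΩ) ((hm s hs).inter hA)
        · exact my_integrable_indicator_one (mΩ := mΩ) hA


omit [StandardBorelSpace Ω] in
lemma my_setIntegral_indicator_one {A s : Set Ω} (hA : MeasurableSet A) :
    ∫ x in s, A.indicator (fun _ => (1 : ℝ)) x ∂μ = (μ (A ∩ s)).toReal := by
  rw [setIntegral_indicator hA, setIntegral_const, Set.inter_comm]
  simp
  rfl

omit [StandardBorelSpace Ω] in
lemma my_integrableOn_smul {G : Ω → ℝ} (hG : Integrable G μ) (c : ℝ) (s : Set Ω) :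
    IntegrableOn (c • G) s μ := (hG.smul c).integrableOn

omit [StandardBorelSpace Ω] in
lemma my_setIntegral_smul (G : Ω → ℝ) (c : ℝ) (s : Set Ω) :
    ∫ x in s, (c • G) x ∂μ = c * ∫ x in s, G x ∂μ := by
  simp only [Pi.smul_apply, smul_eq_mul]
  exact integral_const_mul c _

omit [StandardBorelSpace Ω] in
/-- If `t` is independent of `ℬ` and `m' ≤ ℬ`, then `μ⟦t ∩ C | m'⟧ = μ(t) • μ⟦C | m'⟧`. -/
lemma my_condexp_indep {𝒜 ℬ m' : MeasurableSpace Ω} (h𝒜 : 𝒜 ≤ mΩ) (hℬ : ℬ ≤ mΩ)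
    (hm' : m' ≤ ℬ) (hAB : ProbabilityTheory.Indep 𝒜 ℬ μ)
    {t C : Set Ω} (ht : MeasurableSet[𝒜] t) (hC : MeasurableSet[ℬ] C) :
    (μ⟦t ∩ C | m'⟧) =ᵐ[μ] (μ t).toReal • (μ⟦C | m'⟧) := by
  have hm : m' ≤ mΩ := hm'.trans hℬ
  have htC : MeasurableSet[mΩ] (t ∩ C) := (h𝒜 t ht).inter (hℬ C hC)
  refine (ae_eq_condExp_of_forall_setIntegral_eq hm
    (my_integrable_indicator_one (mΩ := mΩ) htC)
    (fun s _ _ => my_integrableOn_smul (mΩ := mΩ) integrable_condExp _ s) (fun s hs hμs => ?_) ?_).symm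
  · have hInd := (Indep_iff 𝒜 ℬ μ).1 hAB t (C ∩ s) ht (hC.inter (hm' s hs))
    calc ∫ x in s, ((μ t).toReal • (μ⟦C | m'⟧)) x ∂μ
        = (μ t).toReal * ∫ x in s, (μ⟦C | m'⟧) x ∂μ := my_setIntegral_smul (mΩ := mΩ) _ _ _
      _ = (μ t).toReal * ∫ x in s, C.indicator (fun _ => (1:ℝ)) x ∂μ := by
          rw [setIntegral_condExp hm (my_integrable_indicator_one (mΩ := mΩ) (hℬ C hC)) hs]
      _ = (μ t).toReal * (μ (C ∩ s)).toReal := by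
          rw [my_setIntegral_indicator_one (mΩ := mΩ) (hℬ C hC)]
      _ = (μ (t ∩ (C ∩ s))).toReal := by rw [hInd, ENNReal.toReal_mul]
      _ = (μ ((t ∩ C) ∩ s)).toReal := by rw [Set.inter_assoc]
      _ = ∫ x in s, (t ∩ C).indicator (fun _ => (1:ℝ)) x ∂μ :=
          (my_setIntegral_indicator_one (mΩ := mΩ) htC).symm
  · exact (stronglyMeasurable_condExp.const_smul _).aestronglyMeasurable

lemma my_condIndep_of_indep {𝒜 ℬ m' m₁ m₂ : MeasurableSpace Ω}
    (h𝒜 : 𝒜 ≤ mΩ) (hℬ : ℬ ≤ mΩ) (hm' : m' ≤ ℬ)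
    (h1 : m₁ ≤ m' ⊔ 𝒜) (h2 : m₂ ≤ ℬ)
    (hAB : ProbabilityTheory.Indep 𝒜 ℬ μ) (hle : m' ≤ mΩ) :
    ProbabilityTheory.CondIndep m' m₁ m₂ hle μ := by
  have hsup : m' ⊔ 𝒜 ≤ mΩ := sup_le (hm'.trans hℬ) h𝒜
  suffices h : ProbabilityTheory.CondIndep m' (m' ⊔ 𝒜) ℬ hle μ by
    exact condIndep_of_condIndep_of_le_left (condIndep_of_condIndep_of_le_right h h2) h1
  set p1 : Set (Set Ω) :=
    {u | ∃ s, MeasurableSet[m'] s ∧ ∃ t, MeasurableSet[𝒜] t ∧ u = s ∩ t} with hp1def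
  have hp1m : ∀ u ∈ p1, MeasurableSet[mΩ] u := by
    rintro u ⟨s, hs, t, ht, rfl⟩; exact (hle s hs).inter (h𝒜 t ht)
  have hp2m : ∀ u ∈ {u | MeasurableSet[ℬ] u}, MeasurableSet[mΩ] u := fun u hu => hℬ u hu
  have hpi1 : IsPiSystem p1 := by
    rintro u ⟨s, hs, t, ht, rfl⟩ v ⟨s', hs', t', ht', rfl⟩ _
    exact ⟨s ∩ s', hs.inter hs', t ∩ t', ht.inter ht', by rw [Set.inter_inter_inter_comm]⟩
  have hpi2 : IsPiSystem {u | MeasurableSet[ℬ] u} :=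
    fun u hu v hv _ => MeasurableSet.inter (m := ℬ) hu hv
  have hgen1 : m' ⊔ 𝒜 = generateFrom p1 := by
    refine le_antisymm (sup_le ?_ ?_) (generateFrom_le ?_)
    · exact fun s hs => measurableSet_generateFrom ⟨s, hs, Set.univ, MeasurableSet.univ,
        (Set.inter_univ s).symm⟩
    · exact fun t ht => measurableSet_generateFrom ⟨Set.univ, MeasurableSet.univ, t, ht,
        (Set.univ_inter t).symm⟩
    · rintro u ⟨s, hs, t, ht, rfl⟩
      exact MeasurableSet.inter ((le_sup_left : m' ≤ m' ⊔ 𝒜) s hs)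
        ((le_sup_right : 𝒜 ≤ m' ⊔ 𝒜) t ht)
  have hgen2 : ℬ = generateFrom {u | MeasurableSet[ℬ] u} :=
    (@generateFrom_measurableSet Ω ℬ).symm
  refine CondIndepSets.condIndep (mΩ := mΩ) (m₁ := m' ⊔ 𝒜) (m₂ := ℬ)
    hsup hℬ hpi1 hpi2 hgen1 hgen2 ?_
  rw [condIndepSets_iff (mΩ := mΩ) m' hle p1 _ hp1m hp2m μ]
  rintro u B ⟨s, hs, t, ht, rfl⟩ hB
  have hconst : (μ⟦t | m'⟧) =ᵐ[μ] fun _ => (μ t).toReal := by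
    have h0 := my_condexp_indep (mΩ := mΩ) h𝒜 hℬ hm' hAB ht (MeasurableSet.univ (m := ℬ))
    rw [Set.inter_univ] at h0
    refine h0.trans ?_
    have huniv : (μ⟦(Set.univ : Set Ω) | m'⟧) = fun _ => (1:ℝ) := by
      rw [Set.indicator_univ]; exact condExp_const hle 1
    rw [huniv]
    refine Filter.Eventually.of_forall fun ω => ?_
    simp
  have h1 := my_condexp_inter_left (mΩ := mΩ) (μ := μ) hle hs ((h𝒜 t ht).inter (hℬ B hB))
  have h2 := my_condexp_indep (mΩ := mΩ) h𝒜 hℬ hm' hAB ht hB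
  have h3 := my_condexp_inter_left (mΩ := mΩ) (μ := μ) hle hs (h𝒜 t ht)
  have e1 : s ∩ t ∩ B = s ∩ (t ∩ B) := by rw [Set.inter_assoc]
  rw [e1]
  filter_upwards [h1, h2, h3, hconst] with ω h1 h2 h3 hconst
  simp only [Pi.mul_apply, Pi.smul_apply, smul_eq_mul] at *
  rw [h1, h2, h3, hconst]
  ring

end AuxProb

section MeasHelpers

lemma my_meas_pi {Ω ι : Type*} {π : ι → Type*} [∀ a, MeasurableSpace (π a)]
    {m : MeasurableSpace Ω} (f : Ω → ∀ a, π a)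
    (hf : ∀ a, Measurable[m] fun c => f c a) : Measurable[m] f :=
  measurable_pi_lambda f hf

lemma my_meas_comp {Ω A B : Type*} {m : MeasurableSpace Ω} [MeasurableSpace A] [MeasurableSpace B]
    {g : A → B} (hg : Measurable g) {Z : Ω → A} (hZ : Measurable[m] Z) :
    Measurable[m] fun ω => g (Z ω) := hg.comp hZ

lemma my_meas_pair {Ω A B C : Type*} {m : MeasurableSpace Ω}
    [MeasurableSpace A] [MeasurableSpace B] [MeasurableSpace C]
    {F : A × B → C} (hF : Measurable F) {Z : Ω → A} {u : Ω → B}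
    (hZ : Measurable[m] Z) (hu : Measurable[m] u) :
    Measurable[m] fun ω => F (Z ω, u ω) := hF.comp (hZ.prodMk hu)

lemma my_condIndepFun {Ω : Type*} {𝒜 ℬ m' : MeasurableSpace Ω}
    [mΩ : MeasurableSpace Ω] [StandardBorelSpace Ω]
    {μ : MeasureTheory.Measure Ω} [IsProbabilityMeasure μ]
    (h𝒜 : 𝒜 ≤ mΩ) (hℬ : ℬ ≤ mΩ) (hm' : m' ≤ ℬ)
    {f g : Ω → ℝ} (hf : MeasurableSpace.comap f Real.measurableSpace ≤ m' ⊔ 𝒜)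
    (hg : MeasurableSpace.comap g Real.measurableSpace ≤ ℬ)
    (hAB : ProbabilityTheory.Indep 𝒜 ℬ μ) (hle : m' ≤ mΩ) :
    ProbabilityTheory.CondIndepFun m' hle f g μ := by
  rw [ProbabilityTheory.condIndepFun_iff_condIndep (mΩ := mΩ)]
  exact my_condIndep_of_indep h𝒜 hℬ hm' hf hg hAB hle

end MeasHelpers



variable {V : Type*}

/-- A directed walk of length `n` from `j` to `i`. -/
def DWalk (E : V → V → Prop) : ℕ → V → V → Prop
  | 0 => fun j i => j = i
  | n + 1 => fun j i => ∃ k, E j k ∧ DWalk E n k i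

/-- Influence sets of message passing: `S_i^0 = {i}`,
`S_i^{l+1} = S_i^l ∪ ⋃_{j ∈ N_i} S_j^l`. -/
def Influence (E : V → V → Prop) : ℕ → V → Set V
  | 0, i => {i}
  | l + 1, i => Influence E l i ∪ ⋃ j ∈ {j | E j i}, Influence E l j

/-- `j` is an ancestor of `i`: there is a directed walk of positive length. -/
def Ancestor (E : V → V → Prop) (j i : V) : Prop := ∃ n, 0 < n ∧ DWalk E n j i

/-- A directed graph is acyclic (a DAG). -/
def Acyclic (E : V → V → Prop) : Prop := ∀ v, ¬ Relation.TransGen E v v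

/-- `f : Fin (n+1) → V` is a walk: consecutive vertices are joined by edges. -/
def IsWalkFun (E : V → V → Prop) (n : ℕ) (f : Fin (n + 1) → V) : Prop :=
  ∀ k : Fin n, E (f k.castSucc) (f k.succ)

/-- `f` is a directed path of length `n` from `j` to `i`. -/
def IsPathFun (E : V → V → Prop) (n : ℕ) (f : Fin (n + 1) → V) (j i : V) : Prop :=
  f 0 = j ∧ f (Fin.last n) = i ∧ IsWalkFun E n f ∧ Function.Injective f

/-- `i` together with its ancestors. -/
def anStar (E : V → V → Prop) (i : V) : Set V := insert i {j | Relation.TransGen E j i}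

lemma anStar_mono {E : V → V → Prop} {k i : V} (hk : E k i) : anStar E k ⊆ anStar E i := by
  rintro j hj
  rcases Set.mem_insert_iff.1 hj with rfl | hj
  · exact Or.inr (Relation.TransGen.single hk)
  · exact Or.inr (Relation.TransGen.tail hj hk)

/-- The σ-algebra generated by all of the `U k`, `k ≠ i`. -/
def mySigmaB {Ω : Type*} {d : ℕ} (U : Fin d → Ω → ℝ) (i : Fin d) : MeasurableSpace Ω :=
  ⨆ k ∈ ({i}ᶜ : Set (Fin d)), MeasurableSpace.comap (U k) Real.measurableSpace

theorem stmt13 {Ω : Type*} [MeasurableSpace Ω] [StandardBorelSpace Ω] [Nonempty Ω]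
    (μ : MeasureTheory.Measure Ω) [MeasureTheory.IsProbabilityMeasure μ]
    {d : ℕ} (E : Fin d → Fin d → Prop) (hacyc : Acyclic E)
    (U : Fin d → Ω → ℝ) (hU : ∀ i, Measurable (U i))
    (hindep : ProbabilityTheory.iIndepFun U μ)
    (ftil : ∀ i : Fin d, ({j // E j i} → ℝ) → ℝ → ℝ)
    (hftil : ∀ i, Measurable (Function.uncurry (ftil i)))
    (X : Fin d → Ω → ℝ) (hXm : ∀ i, Measurable (X i))
    (hX : ∀ i ω, X i ω = ftil i (fun j => X j.1 ω) (U i ω)) :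
    (∀ i j : Fin d, j ≠ i → ¬ Relation.TransGen E i j →
      ∀ hle : MeasurableSpace.comap (fun ω (k : {k // E k i}) => X k.1 ω)
          MeasurableSpace.pi ≤ ‹MeasurableSpace Ω›,
        ProbabilityTheory.CondIndepFun _ hle (X i) (X j) μ) ∧
    (∀ i : Fin d, ∃ g : ({j // j ∈ anStar E i} → ℝ) → ℝ,
      Measurable g ∧ ∀ ω, X i ω = g fun j => U j.1 ω) := by
  -- well-foundedness of the edge relation
  have hwfT : WellFounded (Relation.TransGen E) := by
    haveI : IsTrans (Fin d) (Relation.TransGen E) := ⟨fun _ _ _ => Relation.TransGen.trans⟩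
    haveI : IsIrrefl (Fin d) (Relation.TransGen E) := ⟨hacyc⟩
    exact Finite.wellFounded_of_trans_of_irrefl _
  have hwf : WellFounded E := Subrelation.wf (fun h => Relation.TransGen.single h) hwfT
  -- Part 2
  have part2 : ∀ i : Fin d, ∃ g : ({j // j ∈ anStar E i} → ℝ) → ℝ,
      Measurable g ∧ ∀ ω, X i ω = g fun j => U j.1 ω := by
    intro i
    induction i using hwf.induction with
    | _ i ih =>
      choose g hgm hgrep using ih
      refine ⟨fun u => ftil i (fun k => g k.1 k.2 fun j => u ⟨j.1, anStar_mono k.2 j.2⟩)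
        (u ⟨i, Set.mem_insert _ _⟩), ?_, ?_⟩
      · have h1 : Measurable fun (u : {j // j ∈ anStar E i} → ℝ) =>
            (fun k : {k // E k i} => g k.1 k.2 fun j => u ⟨j.1, anStar_mono k.2 j.2⟩) :=
          my_meas_pi _ fun k => my_meas_comp (hgm k.1 k.2)
            (my_meas_pi _ fun j => measurable_pi_apply _)
        have h2 : Measurable fun (u : {j // j ∈ anStar E i} → ℝ) =>
            u ⟨i, Set.mem_insert _ _⟩ := measurable_pi_apply _
        exact my_meas_pair (hftil i) h1 h2
      · intro ω
        rw [hX i ω]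
        congr 1
        funext k
        exact hgrep k.1 k.2 ω
  refine ⟨?_, part2⟩
  intro i j hji hnd hle
  classical
  have hℬ : mySigmaB U i ≤ ‹MeasurableSpace Ω› :=
    iSup_le fun k => iSup_le fun _ => (hU k).comap_le
  have hIndep : ProbabilityTheory.Indep
      (MeasurableSpace.comap (U i) Real.measurableSpace) (mySigmaB U i) μ := by
    have h := ProbabilityTheory.indep_iSup_of_disjoint
      (m := fun k => MeasurableSpace.comap (U k) Real.measurableSpace)
      (fun k => (hU k).comap_le) hindep
      (disjoint_compl_right : Disjoint ({i} : Set (Fin d)) ({i}ᶜ))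
    have hsingle : (⨆ k ∈ ({i} : Set (Fin d)), MeasurableSpace.comap (U k)
        Real.measurableSpace) = MeasurableSpace.comap (U i) Real.measurableSpace := by
      simp
    rw [hsingle] at h
    exact h
  -- measurability w.r.t. ℬ of X k for k not having i in its weak ancestry
  have hXB : ∀ k : Fin d, i ∉ anStar E k → Measurable[mySigmaB U i] (X k) := by
    intro k hk
    obtain ⟨g, hg, hrep⟩ := part2 k
    have hXeq : X k = fun ω => g fun j' => U j'.1 ω := funext hrep
    rw [hXeq]
    refine my_meas_comp hg (my_meas_pi _ fun j' => ?_)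
    have hne : j'.1 ∈ ({i}ᶜ : Set (Fin d)) := by
      intro hmem
      rw [Set.mem_singleton_iff] at hmem
      exact hk (hmem ▸ j'.2)
    have hle' : MeasurableSpace.comap (U j'.1) Real.measurableSpace ≤ mySigmaB U i :=
      le_iSup₂ (f := fun k _ => MeasurableSpace.comap (U k) Real.measurableSpace) j'.1 hne
    exact Measurable.of_comap_le hle'
  have hnotanj : i ∉ anStar E j := by
    rintro (h | h)
    · exact hji h.symm
    · exact hnd h
  have hnotanpar : ∀ k : Fin d, E k i → i ∉ anStar E k := by
    intro k hki
    rintro (h | h)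
    · exact hacyc i (Relation.TransGen.single (h ▸ hki))
    · exact hacyc i (Relation.TransGen.tail h hki)
  have hm'B : MeasurableSpace.comap (fun ω (k : {k // E k i}) => X k.1 ω)
      MeasurableSpace.pi ≤ mySigmaB U i :=
    Measurable.comap_le (my_meas_pi _ fun k => hXB k.1 (hnotanpar k.1 k.2))
  have hm2 : MeasurableSpace.comap (X j) Real.measurableSpace ≤ mySigmaB U i :=
    Measurable.comap_le (hXB j hnotanj)
  have hm1 : MeasurableSpace.comap (X i) Real.measurableSpace ≤
      MeasurableSpace.comap (fun ω (k : {k // E k i}) => X k.1 ω) MeasurableSpace.pi ⊔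
        MeasurableSpace.comap (U i) Real.measurableSpace := by
    have hZ : Measurable[MeasurableSpace.comap (fun ω (k : {k // E k i}) => X k.1 ω)
        MeasurableSpace.pi ⊔ MeasurableSpace.comap (U i) Real.measurableSpace]
        fun ω (k : {k // E k i}) => X k.1 ω := Measurable.of_comap_le le_sup_left
    have hUi : Measurable[MeasurableSpace.comap (fun ω (k : {k // E k i}) => X k.1 ω)
        MeasurableSpace.pi ⊔ MeasurableSpace.comap (U i) Real.measurableSpace]
        (U i) := Measurable.of_comap_le le_sup_right
    have hXieq : X i = fun ω => Function.uncurry (ftil i)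
        ((fun k : {k // E k i} => X k.1 ω), U i ω) := funext fun ω => hX i ω
    refine Measurable.comap_le ?_
    rw [hXieq]
    exact my_meas_pair (hftil i) hZ hUi
  exact my_condIndepFun (hU i).comap_le hℬ hm'B hm1 hm2 hIndep hle
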